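/- Let α < β, λ > 0, m ∈ ℝ and suppose α − (β−α)m²/(2λ) < ρ < β + (β−α)m²/(2λ) and ρ ≠ (α+β)/2. Then the function f(ρ̃) = ρ̃ − ρ − λ(α+β−2ρ̃)m²/(2(λ+(ρ̃−α)(β−ρ̃))²) has a unique root ρ* in the open interval (α,β). -/

import Mathlib

open Set

/-- If `α - (β-α)m²/(2λ) < ρ < β + (β-α)m²/(2λ)` and `ρ ≠ (α+β)/2`, then
`f(ρ̃) = ρ̃ - ρ - λ(α+β-2ρ̃)m²/(2(λ+(ρ̃-α)(β-ρ̃))²)` has a unique root in `(α,β)`. -/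
theorem stmt_5 (α β lam ρ m : ℝ) (hαβ : α < β) (hlam : 0 < lam)
    (hρl : α - (β - α) * m ^ 2 / (2 * lam) < ρ)
    (hρr : ρ < β + (β - α) * m ^ 2 / (2 * lam))
    (hρmid : ρ ≠ (α + β) / 2)
    (f : ℝ → ℝ)
    (hf : ∀ s, f s = s - ρ - lam * (α + β - 2 * s) * m ^ 2
      / (2 * (lam + (s - α) * (β - s)) ^ 2)) :
    ∃! x : ℝ, x ∈ Ioo α β ∧ f x = 0 := by
  have hfe : f = fun s => s - ρ - lam * (α + β - 2 * s) * m ^ 2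
      / (2 * (lam + (s - α) * (β - s)) ^ 2) := funext hf
  subst hfe
  have hm2 : (0:ℝ) ≤ m ^ 2 := sq_nonneg m
  have hDpos : ∀ s ∈ Icc α β, 0 < lam + (s - α) * (β - s) := by
    intro s hs
    have h1 : 0 ≤ (s - α) * (β - s) :=
      mul_nonneg (by linarith [hs.1]) (by linarith [hs.2])
    linarith
  -- continuity on Icc
  have hcont : ContinuousOn (fun s => s - ρ - lam * (α + β - 2 * s) * m ^ 2
      / (2 * (lam + (s - α) * (β - s)) ^ 2)) (Icc α β) := by
    apply ContinuousOn.sub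
    · exact (continuous_id.sub continuous_const).continuousOn
    · apply ContinuousOn.div
      · fun_prop
      · fun_prop
      · intro s hs
        have := hDpos s hs
        positivity
  -- derivative positivity
  have hderiv : ∀ x ∈ Ioo α β,
      0 < deriv (fun s => s - ρ - lam * (α + β - 2 * s) * m ^ 2
        / (2 * (lam + (s - α) * (β - s)) ^ 2)) x := by
    intro x hx
    have hd : 0 < lam + (x - α) * (β - x) := hDpos x (Ioo_subset_Icc_self hx)
    set d : ℝ := lam + (x - α) * (β - x) with hdd
    have h1 : HasDerivAt (fun s : ℝ => lam + (s - α) * (β - s)) (α + β - 2 * x) x := by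
      have h := (hasDerivAt_const x lam).add
        (((hasDerivAt_id x).sub_const α).mul ((hasDerivAt_const x β).sub (hasDerivAt_id x)))
      exact h.congr_deriv (by simp only [id, Pi.sub_apply]; ring)
    have h2 : HasDerivAt (fun s : ℝ => 2 * (lam + (s - α) * (β - s)) ^ 2)
        (2 * (↑2 * d ^ 1 * (α + β - 2 * x))) x := (h1.pow 2).const_mul 2
    have h3 : HasDerivAt (fun s : ℝ => lam * (α + β - 2 * s) * m ^ 2)
        (lam * (-2) * m ^ 2) x := by
      have h := (((hasDerivAt_const x (α + β)).sub
        ((hasDerivAt_id x).const_mul 2)).const_mul lam).mul_const (m ^ 2)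
      exact h.congr_deriv (by ring)
    have hden : (2 : ℝ) * d ^ 2 ≠ 0 := by positivity
    have hdiv := h3.div h2 hden
    have hf' : HasDerivAt (fun s => s - ρ - lam * (α + β - 2 * s) * m ^ 2
        / (2 * (lam + (s - α) * (β - s)) ^ 2))
        (1 - (lam * (-2) * m ^ 2 * (2 * d ^ 2)
          - lam * (α + β - 2 * x) * m ^ 2 * (2 * (↑2 * d ^ 1 * (α + β - 2 * x))))
          / (2 * d ^ 2) ^ 2) x := ((hasDerivAt_id x).sub_const ρ).sub hdiv
    rw [hf'.deriv]
    have hA : lam * (-2) * m ^ 2 * (2 * d ^ 2)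
        - lam * (α + β - 2 * x) * m ^ 2 * (2 * (↑2 * d ^ 1 * (α + β - 2 * x))) ≤ 0 := by
      push_cast
      nlinarith [sq_nonneg (α + β - 2 * x), sq_nonneg d, mul_nonneg hm2 (sq_nonneg (α + β - 2*x)),
        mul_nonneg (mul_nonneg hlam.le hm2) (mul_nonneg hd.le hd.le),
        mul_nonneg (mul_nonneg (mul_nonneg hlam.le hm2) hd.le) (sq_nonneg (α + β - 2 * x))]
    have hB : (0:ℝ) < (2 * d ^ 2) ^ 2 := by positivity
    have := div_nonpos_of_nonpos_of_nonneg hA hB.le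
    linarith
  have hmono : StrictMonoOn (fun s => s - ρ - lam * (α + β - 2 * s) * m ^ 2
      / (2 * (lam + (s - α) * (β - s)) ^ 2)) (Icc α β) :=
    strictMonoOn_of_deriv_pos (convex_Icc α β) hcont (by rwa [interior_Icc])
  -- values at endpoints
  have hlam' : lam ≠ 0 := ne_of_gt hlam
  have hfa : (fun s => s - ρ - lam * (α + β - 2 * s) * m ^ 2
      / (2 * (lam + (s - α) * (β - s)) ^ 2)) α < 0 := by
    show α - ρ - lam * (α + β - 2 * α) * m ^ 2 / (2 * (lam + (α - α) * (β - α)) ^ 2) < 0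
    have : α - ρ - lam * (α + β - 2 * α) * m ^ 2 / (2 * (lam + (α - α) * (β - α)) ^ 2)
        = α - ρ - (β - α) * m ^ 2 / (2 * lam) := by
      simp only [sub_self, zero_mul, mul_zero, add_zero]
      field_simp
      ring
    rw [this]
    have h2 : α - (β - α) * m ^ 2 / (2 * lam) < ρ := hρl
    linarith
  have hfb : (0:ℝ) < (fun s => s - ρ - lam * (α + β - 2 * s) * m ^ 2
      / (2 * (lam + (s - α) * (β - s)) ^ 2)) β := by
    show 0 < β - ρ - lam * (α + β - 2 * β) * m ^ 2 / (2 * (lam + (β - α) * (β - β)) ^ 2)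
    have : β - ρ - lam * (α + β - 2 * β) * m ^ 2 / (2 * (lam + (β - α) * (β - β)) ^ 2)
        = β - ρ + (β - α) * m ^ 2 / (2 * lam) := by
      simp only [sub_self, zero_mul, mul_zero, add_zero]
      field_simp
      ring
    rw [this]
    linarith
  obtain ⟨x, hx, hfx⟩ := intermediate_value_Ioo (le_of_lt hαβ) hcont ⟨hfa, hfb⟩
  refine ⟨x, ⟨hx, hfx⟩, ?_⟩
  rintro y ⟨hy, hfy⟩
  exact hmono.injOn (Ioo_subset_Icc_self hy) (Ioo_subset_Icc_self hx) (hfy.trans hfx.symm)
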